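/- If W is a connected bounded open subset of the plane ℝ², and K is the unbounded connected component of ℝ² − W, then the boundary ∂K of K is connected. -/

import Mathlib

namespace FrontierAux

open Set Metric Complex Real


/-- A continuous real function taking integer values on a preconnected set is constant there. -/
lemma int_valued_eq {X : Type*} [TopologicalSpace X] {s : Set X} (hs : IsPreconnected s)
    {ψ : X → ℝ} (hc : Continuous ψ) (hint : ∀ p ∈ s, ∃ n : ℤ, ψ p = n)
    {x y : X} (hx : x ∈ s) (hy : y ∈ s) : ψ x = ψ y := by
  have key : ∀ a ∈ s, ∀ b ∈ s, ¬ ψ a < ψ b := by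
    intro a ha b hb hlt
    obtain ⟨n, hn⟩ := hint a ha
    obtain ⟨m, hm⟩ := hint b hb
    have h2 : ψ a + 1/2 ∈ Icc (ψ a) (ψ b) := by
      constructor
      · linarith
      · rw [hn, hm] at hlt ⊢
        have h3 : n < m := by exact_mod_cast hlt
        have h4 : (n : ℝ) + 1 ≤ m := by exact_mod_cast h3
        linarith
    obtain ⟨z, hz, hz2⟩ := hs.intermediate_value ha hb hc.continuousOn h2
    obtain ⟨k, hk⟩ := hint z hz
    rw [hk, hn] at hz2
    have h5 : (2 * k : ℝ) = 2 * n + 1 := by linarith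
    have h6 : (2 * k : ℤ) = 2 * n + 1 := by exact_mod_cast h5
    omega
  rcases lt_trichotomy (ψ x) (ψ y) with h | h | h
  · exact absurd h (key x hx y hy)
  · exact h
  · exact absurd h (key y hy x hx)

/-- Connected components of a closed set are closed. -/
lemma isClosed_connectedComponentIn {X : Type*} [TopologicalSpace X] {F : Set X}
    (hF : IsClosed F) (x : X) : IsClosed (connectedComponentIn F x) := by
  by_cases hx : x ∈ F
  · have h1 : IsPreconnected (closure (connectedComponentIn F x)) :=
      (isPreconnected_connectedComponentIn).closure
    have h2 : closure (connectedComponentIn F x) ⊆ F :=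
      hF.closure_subset_iff.mpr (connectedComponentIn_subset F x)
    have h3 : closure (connectedComponentIn F x) ⊆ connectedComponentIn F x :=
      h1.subset_connectedComponentIn (subset_closure (mem_connectedComponentIn hx)) h2
    exact isClosed_of_closure_subset h3
  · rw [connectedComponentIn_eq_empty hx]
    exact isClosed_empty

/-- In a locally connected space, the frontier of a connected component of a closed set
is contained in the frontier of the set. -/
lemma frontier_connectedComponentIn_subset {X : Type*} [TopologicalSpace X]
    [LocallyConnectedSpace X] {F : Set X} (hF : IsClosed F) (x : X) :
    frontier (connectedComponentIn F x) ⊆ frontier F := by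
  intro z hz
  have hCcl : IsClosed (connectedComponentIn F x) := isClosed_connectedComponentIn hF x
  have hzC : z ∈ connectedComponentIn F x := by
    have := frontier_subset_closure (s := connectedComponentIn F x) hz
    rwa [hCcl.closure_eq] at this
  have hzF : z ∈ F := connectedComponentIn_subset F x hzC
  constructor
  · exact subset_closure hzF
  · intro hint
    have hnhds : F ∈ nhds z := mem_interior_iff_mem_nhds.mp hint
    have h1 : connectedComponentIn F z ∈ nhds z := connectedComponentIn_mem_nhds hnhds
    have h2 : connectedComponentIn F z = connectedComponentIn F x := (connectedComponentIn_eq hzC).symm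
    rw [h2] at h1
    exact hz.2 (mem_interior_iff_mem_nhds.mpr h1)

/-- Telescoping product. -/
lemma prod_ratio {h : ℕ → ℂ} (hnz : ∀ j, h j ≠ 0) (N : ℕ) :
    ∏ j ∈ Finset.range N, h (j + 1) / h j = h N / h 0 := by
  induction N with
  | zero => simp [div_self (hnz 0)]
  | succ n ih =>
    rw [Finset.prod_range_succ, ih, mul_comm]
    rw [div_mul_div_comm, mul_comm (h n) (h 0), ← div_mul_div_comm, div_self (hnz n), mul_one]



lemma exp_arg_mul_I {w : ℂ} (hw : ‖w‖ = 1) : Complex.exp (w.arg * I) = w := by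
  have := Complex.norm_mul_exp_arg_mul_I w
  rwa [hw, Complex.ofReal_one, one_mul] at this

lemma lift_exp_eq {f : ℝ × ℝ → ℂ} (habs : ∀ p, ‖f p‖ = 1)
    {N : ℕ} (hN : 0 < N) (p : ℝ × ℝ) :
    Complex.exp (((Complex.arg (f 0) + ∑ j ∈ Finset.range N,
      Complex.arg (f ((((j : ℝ) + 1) / N) • p) / f (((j : ℝ) / N) • p)) : ℝ) : ℂ) * I) = f p := by
  have hnz : ∀ q, f q ≠ 0 := fun q => by
    intro h; have := habs q; rw [h] at this; simp at this
  set h : ℕ → ℂ := fun j => f (((j : ℝ) / N) • p) with hh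
  have hhnz : ∀ j, h j ≠ 0 := fun j => hnz _
  have habsr : ∀ j, ‖h (j + 1) / h j‖ = 1 := by
    intro j
    rw [norm_div]
    simp only [hh]
    rw [habs, habs, div_one]
  have key : ∀ j : ℕ, f ((((j : ℝ) + 1) / N) • p) / f (((j : ℝ) / N) • p) = h (j + 1) / h j := by
    intro j
    simp only [hh]
    norm_num
  have hN0 : (N : ℝ) ≠ 0 := by positivity
  have hstep : ((Complex.arg (f 0) + ∑ j ∈ Finset.range N,
      Complex.arg (f ((((j : ℝ) + 1) / N) • p) / f (((j : ℝ) / N) • p)) : ℝ) : ℂ) * I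
      = (f 0).arg * I + ∑ j ∈ Finset.range N, ((h (j+1) / h j).arg : ℂ) * I := by
    push_cast
    rw [add_mul, Finset.sum_mul]
    congr 1
    exact Finset.sum_congr rfl fun j _ => by rw [key j]
  rw [hstep, Complex.exp_add, Complex.exp_sum]
  have : ∀ j ∈ Finset.range N, Complex.exp (((h (j+1) / h j).arg : ℂ) * I) = h (j+1) / h j :=
    fun j _ => exp_arg_mul_I (habsr j)
  rw [Finset.prod_congr rfl this, prod_ratio hhnz N, exp_arg_mul_I (habs 0)]
  have hN' : h N = f p := by
    simp only [hh, div_self hN0, one_smul]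
  have h0' : h 0 = f 0 := by
    simp only [hh]
    norm_num
  rw [hN', h0', mul_comm, div_mul_cancel₀ _ (hnz 0)]



lemma lift_continuousAt {f : ℝ × ℝ → ℂ} (hf : Continuous f)
    (habs : ∀ p, ‖f p‖ = 1) {R δ : ℝ} (hR : 0 < R) (hδ : 0 < δ)
    (huc : ∀ x y : ℝ × ℝ, ‖x‖ ≤ R → ‖y‖ ≤ R → dist x y < δ → dist (f x) (f y) < 1)
    {N : ℕ} (hN : 0 < N) (hRN : R / N < δ) {p : ℝ × ℝ} (hp : ‖p‖ ≤ R) :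
    ContinuousAt (fun q => Complex.arg (f 0) + ∑ j ∈ Finset.range N,
      Complex.arg (f ((((j : ℝ) + 1) / N) • q) / f (((j : ℝ) / N) • q))) p := by
  have hnz : ∀ q, f q ≠ 0 := fun q => by
    intro h; have := habs q; rw [h] at this; simp at this
  refine ContinuousAt.add continuousAt_const ?_
  refine tendsto_finset_sum _ fun j hj => ?_
  have hjN : (j : ℝ) + 1 ≤ N := by
    have := Finset.mem_range.mp hj
    exact_mod_cast Nat.succ_le_of_lt this
  have hNpos : (0 : ℝ) < N := by exact_mod_cast hN
  -- the two sample points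
  set a := (((j : ℝ) + 1) / N) • p with ha
  set b := (((j : ℝ)) / N) • p with hb
  have hc1 : (0:ℝ) ≤ ((j : ℝ) + 1) / N := by positivity
  have hc1' : ((j : ℝ) + 1) / N ≤ 1 := by
    rw [div_le_one hNpos]; exact hjN
  have hc2 : (0:ℝ) ≤ (j : ℝ) / N := by positivity
  have hc2' : (j : ℝ) / N ≤ 1 := by
    rw [div_le_one hNpos]; linarith
  have hna : ‖a‖ ≤ R := by
    rw [ha, norm_smul, Real.norm_eq_abs, _root_.abs_of_nonneg hc1]
    calc ((j : ℝ) + 1) / N * ‖p‖ ≤ 1 * ‖p‖ := by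
          apply mul_le_mul_of_nonneg_right hc1' (norm_nonneg p)
      _ = ‖p‖ := one_mul _
      _ ≤ R := hp
  have hnb : ‖b‖ ≤ R := by
    rw [hb, norm_smul, Real.norm_eq_abs, _root_.abs_of_nonneg hc2]
    calc (j : ℝ) / N * ‖p‖ ≤ 1 * ‖p‖ := by
          apply mul_le_mul_of_nonneg_right hc2' (norm_nonneg p)
      _ = ‖p‖ := one_mul _
      _ ≤ R := hp
  have hdistab : dist a b < δ := by
    rw [dist_eq_norm, ha, hb, ← sub_smul, norm_smul, Real.norm_eq_abs]
    have : ((j : ℝ) + 1) / N - (j : ℝ) / N = 1 / N := by ring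
    rw [this, _root_.abs_of_nonneg (by positivity)]
    calc 1 / (N:ℝ) * ‖p‖ ≤ 1 / N * R := by
          apply mul_le_mul_of_nonneg_left hp (by positivity)
      _ = R / N := by ring
      _ < δ := hRN
  have hdistf : dist (f a) (f b) < 1 := huc a b hna hnb hdistab
  -- ratio is in the slit plane
  have hslit : f a / f b ∈ Complex.slitPlane := by
    rw [Complex.mem_slitPlane_iff]
    left
    have hsub : f a / f b - 1 = (f a - f b) / f b := by
      rw [sub_div, div_self (hnz b)]
    have habs1 : ‖f a / f b - 1‖ < 1 := by
      rw [hsub, norm_div, habs b, div_one, ← Complex.dist_eq]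
      exact hdistf
    have hre : (1 - f a / f b).re ≤ ‖1 - f a / f b‖ := Complex.re_le_norm _
    have habs2 : ‖1 - f a / f b‖ = ‖f a / f b - 1‖ := by
      rw [← norm_neg, neg_sub]
    have : (1 - f a / f b).re < 1 := lt_of_le_of_lt (habs2 ▸ hre) habs1
    have hre1 : (f a / f b).re = 1 - (1 - f a / f b).re := by
      simp [Complex.sub_re]
    rw [hre1]
    linarith
  have hcont : ContinuousAt (fun q : ℝ × ℝ =>
      f ((((j : ℝ) + 1) / N) • q) / f (((j : ℝ) / N) • q)) p := by
    apply ContinuousAt.div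
    · exact (hf.comp (continuous_const_smul _)).continuousAt
    · exact (hf.comp (continuous_const_smul _)).continuousAt
    · exact hnz _
  have hval : (fun q : ℝ × ℝ => f ((((j : ℝ) + 1) / N) • q) / f (((j : ℝ) / N) • q)) p
      = f a / f b := by rw [ha, hb]
  exact ContinuousAt.comp (g := Complex.arg)
    (f := fun q : ℝ × ℝ => f ((((j : ℝ) + 1) / N) • q) / f (((j : ℝ) / N) • q))
    (Complex.continuousAt_arg hslit) hcont

-- radial retraction
lemma retract_props {R : ℝ} (hR : 0 < R) :
    Continuous (fun p : ℝ × ℝ => (R / max R ‖p‖) • p) ∧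
    (∀ p : ℝ × ℝ, ‖p‖ ≤ R → (R / max R ‖p‖) • p = p) ∧
    (∀ p : ℝ × ℝ, ‖(R / max R ‖p‖) • p‖ ≤ R) ∧
    (∀ p : ℝ × ℝ, R ≤ ‖p‖ → ‖(R / max R ‖p‖) • p‖ = R) := by
  have hmaxpos : ∀ p : ℝ × ℝ, 0 < max R ‖p‖ := fun p => lt_max_of_lt_left hR
  refine ⟨?_, ?_, ?_, ?_⟩
  · apply Continuous.smul (f := fun p : ℝ × ℝ => R / max R ‖p‖) (g := fun p => p) _ continuous_id
    apply Continuous.div continuous_const (continuous_const.max continuous_norm)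
    intro p
    exact ne_of_gt (hmaxpos p)
  · intro p hp
    rw [max_eq_left hp, div_self (ne_of_gt hR), one_smul]
  · intro p
    rw [norm_smul, Real.norm_eq_abs, _root_.abs_of_nonneg (a := R / max R ‖p‖) (by positivity)]
    rw [div_mul_eq_mul_div, mul_comm]
    rw [div_le_iff₀ (hmaxpos p)]
    have : ‖p‖ ≤ max R ‖p‖ := le_max_right _ _
    nlinarith [hR.le]
  · intro p hp
    rw [norm_smul, Real.norm_eq_abs, _root_.abs_of_nonneg (a := R / max R ‖p‖) (by positivity), max_eq_right hp]
    have hppos : 0 < ‖p‖ := lt_of_lt_of_le hR hp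
    field_simp



/-- The plane is unicoherent: if two closed connected sets cover the plane and one of them is
bounded, their intersection is preconnected. -/
theorem plane_unicoherent {P Q : Set (ℝ × ℝ)} (hPcl : IsClosed P) (hQcl : IsClosed Q)
    (hPc : IsPreconnected P) (hQc : IsPreconnected Q) (hPb : Bornology.IsBounded P)
    (hcover : P ∪ Q = univ) : IsPreconnected (P ∩ Q) := by
  by_contra hnot
  rw [IsPreconnected] at hnot
  push_neg at hnot
  obtain ⟨u, v, hu, hv, hcov, hune, hvne, hempty⟩ := hnot
  -- the two pieces of the separation
  set A : Set (ℝ × ℝ) := (P ∩ Q) ∩ vᶜ with hA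
  set B : Set (ℝ × ℝ) := (P ∩ Q) ∩ uᶜ with hB
  have hAcl : IsClosed A := (hPcl.inter hQcl).inter hv.isClosed_compl
  have hBcl : IsClosed B := (hPcl.inter hQcl).inter hu.isClosed_compl
  have hABcover : A ∪ B = P ∩ Q := by
    apply Set.Subset.antisymm
    · exact Set.union_subset inter_subset_left inter_subset_left
    · intro z hz
      by_cases hzv : z ∈ v
      · right
        refine ⟨hz, fun hzu => ?_⟩
        have : z ∈ P ∩ Q ∩ (u ∩ v) := ⟨hz, hzu, hzv⟩
        rw [hempty] at this
        exact this
      · exact Or.inl ⟨hz, hzv⟩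
  have hABdisj : A ∩ B = ∅ := by
    rw [Set.eq_empty_iff_forall_notMem]
    rintro z ⟨⟨hz1, hzv⟩, hz2, hzu⟩
    rcases hcov hz1 with h | h
    · exact hzu h
    · exact hzv h
  have hAne : A.Nonempty := by
    obtain ⟨z, hz, hzu⟩ := hune
    refine ⟨z, hz, fun hzv => ?_⟩
    have : z ∈ P ∩ Q ∩ (u ∩ v) := ⟨hz, hzu, hzv⟩
    rw [hempty] at this
    exact this
  have hBne : B.Nonempty := by
    obtain ⟨z, hz, hzv⟩ := hvne
    refine ⟨z, hz, fun hzu => ?_⟩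
    have : z ∈ P ∩ Q ∩ (u ∩ v) := ⟨hz, hzu, hzv⟩
    rw [hempty] at this
    exact this
  -- a large ball containing P
  obtain ⟨R, hRpos, hPR⟩ : ∃ R, 0 < R ∧ P ⊆ ball 0 R := by
    obtain ⟨R, hR0, hR⟩ := hPb.subset_ball_lt 0 0
    exact ⟨R, hR0, hR⟩
  -- Urysohn function
  have hA'cl : IsClosed (A ∪ {p : ℝ × ℝ | R ≤ ‖p‖}) :=
    hAcl.union (isClosed_le continuous_const continuous_norm)
  have hA'B : Disjoint (A ∪ {p : ℝ × ℝ | R ≤ ‖p‖}) B := by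
    rw [Set.disjoint_left]
    rintro z (hzA | hzR)
    · intro hzB
      rw [Set.eq_empty_iff_forall_notMem] at hABdisj
      exact hABdisj z ⟨hzA, hzB⟩
    · intro hzB
      have : z ∈ P := hzB.1.1
      have : ‖z‖ < R := by simpa [mem_ball, dist_eq_norm] using hPR this
      exact absurd hzR (not_le.mpr this)
  obtain ⟨φ, hφA, hφB, hφrange⟩ := exists_continuous_zero_one_of_isClosed hA'cl hBcl hA'B
  -- the circle-valued function
  classical
  set f : ℝ × ℝ → ℂ := P.piecewise (fun p => Complex.exp ((π * φ p : ℝ) * I))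
      (fun p => Complex.exp ((-(π * φ p) : ℝ) * I)) with hf
  have hfrontP : ∀ a ∈ frontier P, a ∈ P ∩ Q := by
    intro a ha
    have haP : a ∈ P := by
      have := frontier_subset_closure (s := P) ha
      rwa [hPcl.closure_eq] at this
    refine ⟨haP, ?_⟩
    by_contra haQ
    have : Qᶜ ⊆ P := by
      intro z hz
      rcases (hcover ▸ Set.mem_univ z : z ∈ P ∪ Q) with h | h
      · exact h
      · exact absurd h hz
    have : a ∈ interior P := by
      apply mem_interior_iff_mem_nhds.mpr
      exact Filter.mem_of_superset (hQcl.isOpen_compl.mem_nhds haQ) this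
    exact ha.2 this
  have hφPQ : ∀ a ∈ P ∩ Q, φ a = 0 ∨ φ a = 1 := by
    intro a ha
    rw [← hABcover] at ha
    rcases ha with h | h
    · exact Or.inl (hφA (Or.inl h))
    · exact Or.inr (hφB h)
  have hbranch : ∀ a ∈ P ∩ Q,
      Complex.exp ((π * φ a : ℝ) * I) = Complex.exp ((-(π * φ a) : ℝ) * I) := by
    intro a ha
    rcases hφPQ a ha with h | h
    · rw [h]; norm_num
    · rw [h]
      have h1 : ((π * 1 : ℝ) : ℂ) = π := by push_cast; ring
      have h2 : ((-(π * 1) : ℝ) : ℂ) = -(π : ℂ) := by push_cast; ring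
      rw [h1, h2, Complex.exp_pi_mul_I, neg_mul, Complex.exp_neg, Complex.exp_pi_mul_I]
      norm_num
  have hfcont : Continuous f := by
    apply Continuous.piecewise
    · intro a ha
      exact hbranch a (hfrontP a ha)
    · apply Complex.continuous_exp.comp
      exact (Complex.continuous_ofReal.comp (continuous_const.mul φ.continuous)).mul
        continuous_const
    · apply Complex.continuous_exp.comp
      exact (Complex.continuous_ofReal.comp (continuous_const.mul φ.continuous).neg).mul
        continuous_const
  have habs : ∀ p, ‖f p‖ = 1 := by
    intro p
    by_cases hp : p ∈ P
    · rw [hf, Set.piecewise_eq_of_mem _ _ _ hp, Complex.norm_exp]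
      simp
    · rw [hf, Set.piecewise_eq_of_notMem _ _ _ hp, Complex.norm_exp]
      simp
  have hfP : ∀ p ∈ P, f p = Complex.exp ((π * φ p : ℝ) * I) := by
    intro p hp
    rw [hf, Set.piecewise_eq_of_mem _ _ _ hp]
  have hfQ : ∀ p ∈ Q, f p = Complex.exp ((-(π * φ p) : ℝ) * I) := by
    intro p hp
    by_cases hpP : p ∈ P
    · rw [hf, Set.piecewise_eq_of_mem _ _ _ hpP]
      exact hbranch p ⟨hpP, hp⟩
    · rw [hf, Set.piecewise_eq_of_notMem _ _ _ hpP]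
  have hfar : ∀ p : ℝ × ℝ, R ≤ ‖p‖ → f p = 1 := by
    intro p hp
    have hpP : p ∉ P := by
      intro h
      have : ‖p‖ < R := by simpa [mem_ball, dist_eq_norm] using hPR h
      exact absurd hp (not_le.mpr this)
    rw [hf, Set.piecewise_eq_of_notMem _ _ _ hpP]
    have : φ p = 0 := hφA (Or.inr hp)
    rw [this]
    norm_num
  -- uniform continuity on a large closed ball
  have huc0 : UniformContinuousOn f (closedBall 0 R) :=
    (isCompact_closedBall (0 : ℝ × ℝ) R).uniformContinuousOn_of_continuous hfcont.continuousOn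
  obtain ⟨δ, hδpos, hδ⟩ := (Metric.uniformContinuousOn_iff).mp huc0 1 one_pos
  have huc : ∀ x y : ℝ × ℝ, ‖x‖ ≤ R → ‖y‖ ≤ R → dist x y < δ → dist (f x) (f y) < 1 := by
    intro x y hx hy hxy
    exact hδ x (by simpa [mem_closedBall, dist_eq_norm] using hx)
      y (by simpa [mem_closedBall, dist_eq_norm] using hy) hxy
  obtain ⟨N, hN⟩ := exists_nat_gt (R / δ)
  have hNpos : 0 < N := by
    have h0 : (0:ℝ) < R / δ := by positivity
    exact_mod_cast h0.trans hN
  have hNposR : (0:ℝ) < N := by exact_mod_cast hNpos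
  have hRN : R / N < δ := by
    rw [div_lt_iff₀ hNposR]
    have := (div_lt_iff₀ hδpos).mp hN
    nlinarith
  obtain ⟨hrcont, hrid, hrle, hreq⟩ := retract_props hRpos
  set r : ℝ × ℝ → ℝ × ℝ := fun p => (R / max R ‖p‖) • p with hr
  set g₀ : ℝ × ℝ → ℝ := fun q => Complex.arg (f 0) + ∑ j ∈ Finset.range N,
      Complex.arg (f ((((j : ℝ) + 1) / N) • q) / f (((j : ℝ) / N) • q)) with hg₀
  set g : ℝ × ℝ → ℝ := fun p => g₀ (r p) with hg
  have hgcont : Continuous g := by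
    rw [continuous_iff_continuousAt]
    intro p
    exact ContinuousAt.comp (g := g₀) (f := r)
      (lift_continuousAt hfcont habs hRpos hδpos huc hNpos hRN (hrle p))
      hrcont.continuousAt
  have hgexp : ∀ p, Complex.exp ((g p : ℝ) * I) = f p := by
    intro p
    have h1 : Complex.exp ((g p : ℝ) * I) = f (r p) := lift_exp_eq habs hNpos (r p)
    rw [h1]
    by_cases hple : ‖p‖ ≤ R
    · rw [show r p = p from hrid p hple]
    · have hpR : R ≤ ‖p‖ := le_of_not_ge hple
      rw [hfar (r p) (le_of_eq (hreq p hpR).symm), hfar p hpR]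
  -- the two integer-valued functions
  have hπ : (0:ℝ) < π := Real.pi_pos
  set ψP : ℝ × ℝ → ℝ := fun p => (g p - π * φ p) / (2 * π) with hψP
  set ψQ : ℝ × ℝ → ℝ := fun p => (g p + π * φ p) / (2 * π) with hψQ
  have hψPcont : Continuous ψP :=
    ((hgcont.sub (continuous_const.mul φ.continuous)).div_const _)
  have hψQcont : Continuous ψQ :=
    ((hgcont.add (continuous_const.mul φ.continuous)).div_const _)
  have hψPint : ∀ p ∈ P, ∃ n : ℤ, ψP p = n := by
    intro p hp
    have h1 : Complex.exp ((g p : ℝ) * I) = Complex.exp ((π * φ p : ℝ) * I) := by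
      rw [hgexp p, hfP p hp]
    obtain ⟨n, hn⟩ := Complex.exp_eq_exp_iff_exists_int.mp h1
    refine ⟨n, ?_⟩
    have h3 : ((g p : ℝ) : ℂ) * I = ((π * φ p + n * (2 * π) : ℝ) : ℂ) * I := by
      rw [hn]; push_cast; ring
    have h2 := mul_right_cancel₀ Complex.I_ne_zero h3
    have h4 : g p = π * φ p + n * (2 * π) := by exact_mod_cast h2
    rw [hψP]
    dsimp only
    rw [h4]
    field_simp
    ring
  have hψQint : ∀ p ∈ Q, ∃ n : ℤ, ψQ p = n := by
    intro p hp
    have h1 : Complex.exp ((g p : ℝ) * I) = Complex.exp ((-(π * φ p) : ℝ) * I) := by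
      rw [hgexp p, hfQ p hp]
    obtain ⟨n, hn⟩ := Complex.exp_eq_exp_iff_exists_int.mp h1
    refine ⟨n, ?_⟩
    have h3 : ((g p : ℝ) : ℂ) * I = ((-(π * φ p) + n * (2 * π) : ℝ) : ℂ) * I := by
      rw [hn]; push_cast; ring
    have h2 := mul_right_cancel₀ Complex.I_ne_zero h3
    have h4 : g p = -(π * φ p) + n * (2 * π) := by exact_mod_cast h2
    rw [hψQ]
    dsimp only
    rw [h4]
    field_simp
    ring
  -- constancy on P and Q and the contradiction
  obtain ⟨a, haA⟩ := hAne
  obtain ⟨b, hbB⟩ := hBne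
  have haPQ : a ∈ P ∩ Q := haA.1
  have hbPQ : b ∈ P ∩ Q := hbB.1
  have hφa : φ a = 0 := hφA (Or.inl haA)
  have hφb : φ b = 1 := hφB hbB
  have hcP : ψP a = ψP b := int_valued_eq hPc hψPcont hψPint haPQ.1 hbPQ.1
  have hcQ : ψQ a = ψQ b := int_valued_eq hQc hψQcont hψQint haPQ.2 hbPQ.2
  rw [hψP] at hcP
  rw [hψQ] at hcQ
  dsimp only at hcP hcQ
  rw [hφa, hφb] at hcP hcQ
  have hne : (2 * π) ≠ 0 := by positivity
  rw [div_eq_div_iff hne hne] at hcP hcQ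
  nlinarith [hπ]

lemma isConnected_norm_gt {ρ : ℝ} (hρ : 0 ≤ ρ) :
    IsConnected {p : ℝ × ℝ | ρ < ‖p‖} := by
  have hrank : 1 < Module.rank ℝ (ℝ × ℝ) := by
    have h2 : Module.rank ℝ (ℝ × ℝ) = 2 := by
      rw [rank_prod, Module.rank_self]
      simp [one_add_one_eq_two]
    rw [h2]
    exact Cardinal.one_lt_two
  have hs : IsConnected (sphere (0 : ℝ × ℝ) 1) := isConnected_sphere hrank 0 zero_le_one
  have hI : IsConnected (Ioi ρ) := isConnected_Ioi
  have himg := (hs.prod hI).image (fun q : (ℝ × ℝ) × ℝ => q.2 • q.1)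
    (continuous_snd.smul continuous_fst).continuousOn
  convert himg using 1
  ext p
  simp only [Set.mem_setOf_eq, Set.mem_image, Set.mem_prod, mem_sphere_iff_norm, sub_zero,
    Set.mem_Ioi]
  constructor
  · intro hp
    have hppos : 0 < ‖p‖ := lt_of_le_of_lt hρ hp
    refine ⟨(‖p‖⁻¹ • p, ‖p‖), ⟨?_, hp⟩, ?_⟩
    · rw [norm_smul, norm_inv, norm_norm]
      field_simp
    · simp only
      rw [smul_smul]
      rw [mul_inv_cancel₀ (ne_of_gt hppos), one_smul]
  · rintro ⟨⟨v, t⟩, ⟨hv, ht⟩, rfl⟩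
    simp only
    rw [norm_smul, hv, mul_one, Real.norm_eq_abs, abs_of_pos (lt_of_le_of_lt hρ ht)]
    exact ht


end FrontierAux

open Set Metric Complex Real in
/-- If `W` is a connected bounded open subset of the plane `ℝ²` and `K` is the unbounded
connected component of `ℝ² − W`, then the boundary (frontier) `∂K` is connected. -/
theorem frontier_of_unbounded_component_connected (W : Set (ℝ × ℝ))
    (hWconn : IsConnected W) (hWbdd : Bornology.IsBounded W) (hWopen : IsOpen W)
    (K : Set (ℝ × ℝ)) (hK : ∃ x ∈ Wᶜ, K = connectedComponentIn Wᶜ x)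
    (hKunbdd : ¬ Bornology.IsBounded K) :
    IsConnected (frontier K) := by

  obtain ⟨x, hx, rfl⟩ := hK
  set K := connectedComponentIn Wᶜ x with hKdef
  have hWcl : IsClosed Wᶜ := hWopen.isClosed_compl
  have hKcl : IsClosed K := FrontierAux.isClosed_connectedComponentIn hWcl x
  have hKconn : IsConnected K := isConnected_connectedComponentIn_iff.mpr hx
  have hKne : K.Nonempty := hKconn.nonempty
  have hKsub : K ⊆ Wᶜ := connectedComponentIn_subset Wᶜ x
  have hWne : W.Nonempty := hWconn.nonempty
  -- K contains a neighborhood of infinity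
  obtain ⟨ρ, hρpos, hWρ⟩ : ∃ ρ, 0 < ρ ∧ W ⊆ ball 0 ρ := by
    obtain ⟨ρ, h0, h⟩ := hWbdd.subset_ball_lt 0 0
    exact ⟨ρ, h0, h⟩
  set E : Set (ℝ × ℝ) := {p | ρ < ‖p‖} with hE
  have hEconn : IsConnected E := FrontierAux.isConnected_norm_gt hρpos.le
  have hEW : E ⊆ Wᶜ := by
    intro p hp hpW
    have := hWρ hpW
    rw [mem_ball, dist_eq_norm, sub_zero] at this
    exact absurd hp (not_lt.mpr this.le)
  obtain ⟨z, hzK, hzρ⟩ : ∃ z ∈ K, ρ < ‖z‖ := by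
    by_contra h
    push_neg at h
    apply hKunbdd
    apply (isBounded_closedBall (x := (0:ℝ×ℝ)) (r := ρ)).subset
    intro q hq
    rw [mem_closedBall, dist_eq_norm, sub_zero]
    exact h q hq
  have hEK : E ⊆ K := by
    have h1 : E ⊆ connectedComponentIn Wᶜ z :=
      hEconn.isPreconnected.subset_connectedComponentIn hzρ hEW
    have h2 : connectedComponentIn Wᶜ z = K := (connectedComponentIn_eq hzK).symm
    rwa [h2] at h1
  -- Kᶜ is bounded
  have hUbdd : Bornology.IsBounded Kᶜ := by
    apply (isBounded_closedBall (x := (0:ℝ×ℝ)) (r := ρ)).subset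
    intro q hq
    rw [mem_closedBall, dist_eq_norm, sub_zero]
    by_contra h
    exact hq (hEK (lt_of_not_ge h))
  -- Kᶜ is preconnected
  have hWU : W ⊆ Kᶜ := fun p hp hpK => hKsub hpK hp
  obtain ⟨w₀, hw₀⟩ := hWne
  have hCsub : ∀ y ∈ Kᶜ, connectedComponentIn Wᶜ y ⊆ Kᶜ := by
    intro y hy p hpC hpK
    have hyF : y ∈ Wᶜ := connectedComponentIn_nonempty_iff.mp ⟨p, hpC⟩
    have h1 : connectedComponentIn Wᶜ y = K := by
      rw [connectedComponentIn_eq hpC]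
      exact (connectedComponentIn_eq hpK).symm
    exact hy (h1 ▸ mem_connectedComponentIn hyF)
  have hKc_eq : Kᶜ = ⋃₀ ((fun y => W ∪ connectedComponentIn Wᶜ y) '' Kᶜ) := by
    apply Set.Subset.antisymm
    · intro y hy
      refine ⟨W ∪ connectedComponentIn Wᶜ y, ⟨y, hy, rfl⟩, ?_⟩
      by_cases hyW : y ∈ W
      · exact Or.inl hyW
      · exact Or.inr (mem_connectedComponentIn hyW)
    · rintro p ⟨S, ⟨y, hy, rfl⟩, hpS⟩
      rcases hpS with hpW | hpC
      · exact hWU hpW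
      · exact hCsub y hy hpC
  have hUconn : IsPreconnected Kᶜ := by
    rw [hKc_eq]
    apply isPreconnected_sUnion w₀
    · rintro S ⟨y, hy, rfl⟩
      exact Or.inl hw₀
    · rintro S ⟨y, hy, rfl⟩
      show IsPreconnected (W ∪ connectedComponentIn Wᶜ y)
      by_cases hyW : y ∈ Wᶜ
      · set C := connectedComponentIn Wᶜ y with hC
        have hCconn : IsConnected C := isConnected_connectedComponentIn_iff.mpr hyW
        have hCcl : IsClosed C := FrontierAux.isClosed_connectedComponentIn hWcl y
        have hCne : C.Nonempty := hCconn.nonempty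
        have hCW : C ⊆ Wᶜ := connectedComponentIn_subset Wᶜ y
        have hCfront_ne : (frontier C).Nonempty := by
          by_contra h
          rw [Set.not_nonempty_iff_eq_empty] at h
          have hclopen : IsClopen C := isClopen_iff_frontier_eq_empty.mpr h
          rcases isClopen_iff.mp hclopen with h1 | h1
          · exact hCne.ne_empty h1
          · exact (h1 ▸ hCW) (mem_univ w₀) hw₀
        obtain ⟨z', hz'⟩ := hCfront_ne
        have hz'C : z' ∈ C := by
          have := frontier_subset_closure (s := C) hz'
          rwa [hCcl.closure_eq] at this
        have hz'W : z' ∈ closure W := by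
          have h1 := FrontierAux.frontier_connectedComponentIn_subset hWcl y hz'
          rw [frontier_compl] at h1
          exact frontier_subset_closure h1
        have hWz' : IsPreconnected (W ∪ {z'}) :=
          hWconn.isPreconnected.subset_closure subset_union_left
            (union_subset subset_closure (singleton_subset_iff.mpr hz'W))
        have hun : IsPreconnected ((W ∪ {z'}) ∪ C) :=
          IsPreconnected.union z' (Or.inr rfl) hz'C hWz' hCconn.isPreconnected
        have heq : (W ∪ {z'}) ∪ C = W ∪ C := by
          rw [union_assoc]
          congr 1
          exact union_eq_self_of_subset_left (singleton_subset_iff.mpr hz'C)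
        rwa [heq] at hun
      · have h1 : connectedComponentIn Wᶜ y = ∅ := connectedComponentIn_eq_empty hyW
        rw [h1, union_empty]
        exact hWconn.isPreconnected
  -- assemble via unicoherence
  have hPcl : IsClosed (closure Kᶜ) := isClosed_closure
  have hPconn : IsPreconnected (closure Kᶜ) := hUconn.closure
  have hPbdd : Bornology.IsBounded (closure Kᶜ) := hUbdd.closure
  have hcover : closure Kᶜ ∪ K = univ := by
    rw [Set.eq_univ_iff_forall]
    intro p
    by_cases hp : p ∈ K
    · exact Or.inr hp
    · exact Or.inl (subset_closure hp)
  have hPK : closure Kᶜ ∩ K = frontier K := by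
    rw [← frontier_compl, frontier, hKcl.isOpen_compl.interior_eq, Set.diff_eq, compl_compl]
  have hFne : (frontier K).Nonempty := by
    by_contra h
    rw [Set.not_nonempty_iff_eq_empty] at h
    have hclopen : IsClopen K := isClopen_iff_frontier_eq_empty.mpr h
    rcases isClopen_iff.mp hclopen with h1 | h1
    · exact hKne.ne_empty h1
    · exact (h1 ▸ hKsub) (mem_univ w₀) hw₀
  refine ⟨hFne, ?_⟩
  rw [← hPK]
  exact FrontierAux.plane_unicoherent hPcl hKcl hPconn hKconn.isPreconnected hPbdd hcover
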